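/- Let m be a positive integer, let u ∈ ℝᵐ with u_j > 0 for all j, and let w ∈ ℝᵐ with w_j ≥ 0 for all j and Σ_{j=1}^m u_j w_j = 2m. Define u′_j := min{u_j, 1/w_j} if w_j > 0 and u′_j := u_j if w_j = 0. Then Σ_{j=1}^m log(u_j / u′_j) ≥ log(m + 1), where log denotes the natural logarithm. -/

import Mathlib

/-- For reals each ≥ 1, the product is at least the sum minus (card - 1). -/
lemma aux_prod_ge {ι : Type*} (T : Finset ι) (f : ι → ℝ) (h : ∀ j ∈ T, 1 ≤ f j) :
    (∑ j ∈ T, f j) - T.card + 1 ≤ ∏ j ∈ T, f j := by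
  induction T using Finset.cons_induction with
  | empty => simp
  | cons x s hx ih =>
    have hfx : 1 ≤ f x := h x (Finset.mem_cons_self x s)
    have hs : ∀ j ∈ s, 1 ≤ f j := fun j hj => h j (Finset.mem_cons_of_mem hj)
    have ihs := ih hs
    have hP1 : (1:ℝ) ≤ ∏ j ∈ s, f j := by
      calc (1:ℝ) = ∏ _j ∈ s, 1 := by simp
        _ ≤ ∏ j ∈ s, f j := Finset.prod_le_prod (fun _ _ => zero_le_one) hs
    rw [Finset.sum_cons, Finset.prod_cons, Finset.card_cons]
    push_cast
    nlinarith [mul_nonneg (sub_nonneg.2 hfx) (sub_nonneg.2 hP1)]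

/-- The potential-decrease inequality of Claim 4 of the paper: one bound-update
step on `m` variables decreases the potential `∑ log u_j` by at least `log(m+1)`. -/
theorem statement14 (m : ℕ) (hm : 0 < m)
    (u w : Fin m → ℝ) (hu : ∀ j, 0 < u j) (hw : ∀ j, 0 ≤ w j)
    (hsum : ∑ j, u j * w j = 2 * (m : ℝ))
    (u' : Fin m → ℝ)
    (hu' : ∀ j, u' j = if 0 < w j then min (u j) (1 / w j) else u j) :
    Real.log ((m : ℝ) + 1) ≤ ∑ j, Real.log (u j / u' j) := by
  set a : Fin m → ℝ := fun j => u j * w j with ha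
  have key : ∀ j, Real.log (u j / u' j) = Real.log (max 1 (a j)) := by
    intro j
    rw [hu' j]
    by_cases hwj : 0 < w j
    · rw [if_pos hwj]
      rcases le_total (u j) (1 / w j) with h | h
      · have h1 : a j ≤ 1 := (le_div_iff₀ hwj).mp h
        rw [min_eq_left h, div_self (hu j).ne', max_eq_left h1]
      · have h1 : 1 ≤ a j := (div_le_iff₀ hwj).mp h
        rw [min_eq_right h, max_eq_right h1]
        rw [ha]; field_simp
    · have hw0 : w j = 0 := le_antisymm (not_lt.mp hwj) (hw j)
      rw [if_neg hwj, div_self (hu j).ne']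
      simp [ha, hw0]
  simp only [key]
  -- the set of large coordinates
  set S : Finset (Fin m) := Finset.univ.filter (fun j => 1 < a j) with hS
  have hsplit : ∑ j, Real.log (max 1 (a j)) = ∑ j ∈ S, Real.log (a j) := by
    rw [← Finset.sum_filter_add_sum_filter_not Finset.univ (fun j => 1 < a j)]
    have h1 : ∑ j ∈ Finset.univ.filter (fun j => ¬ 1 < a j),
        Real.log (max 1 (a j)) = 0 := by
      apply Finset.sum_eq_zero
      intro j hj
      rw [Finset.mem_filter] at hj
      rw [max_eq_left (not_lt.mp hj.2), Real.log_one]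
    have h2 : ∑ j ∈ S, Real.log (max 1 (a j)) = ∑ j ∈ S, Real.log (a j) := by
      apply Finset.sum_congr rfl
      intro j hj
      rw [Finset.mem_filter] at hj
      rw [max_eq_right hj.2.le]
    rw [h1, h2, add_zero]
  rw [hsplit]
  have hSle : ∀ j ∈ S, 1 ≤ a j := by
    intro j hj; rw [Finset.mem_filter] at hj; exact hj.2.le
  -- sum over S is at least m + |S|
  have hsumS : (m : ℝ) + S.card ≤ ∑ j ∈ S, a j := by
    have hcompl : ∑ j ∈ Finset.univ.filter (fun j => ¬ 1 < a j), a j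
        ≤ (Finset.univ.filter (fun j => ¬ 1 < a j)).card := by
      calc ∑ j ∈ Finset.univ.filter (fun j => ¬ 1 < a j), a j
          ≤ ∑ j ∈ Finset.univ.filter (fun j => ¬ 1 < a j), 1 := by
            apply Finset.sum_le_sum
            intro j hj; rw [Finset.mem_filter] at hj; exact not_lt.mp hj.2
        _ = _ := by simp
    have hcard : S.card + (Finset.univ.filter (fun j => ¬ 1 < a j)).card = m := by
      rw [hS, Finset.card_filter_add_card_filter_not]
      simp
    have htot : ∑ j ∈ S, a j + ∑ j ∈ Finset.univ.filter (fun j => ¬ 1 < a j), a j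
        = 2 * (m : ℝ) := by
      rw [← hsum, ← Finset.sum_filter_add_sum_filter_not Finset.univ (fun j => 1 < a j)]
    have : (S.card : ℝ) + (Finset.univ.filter (fun j => ¬ 1 < a j)).card = m := by
      exact_mod_cast congrArg (Nat.cast : ℕ → ℝ) hcard
    linarith
  have hprod : (m : ℝ) + 1 ≤ ∏ j ∈ S, a j := by
    have := aux_prod_ge S a hSle
    linarith
  have hpos : ∀ j ∈ S, 0 < a j := fun j hj => lt_of_lt_of_le one_pos (hSle j hj)
  calc Real.log ((m : ℝ) + 1) ≤ Real.log (∏ j ∈ S, a j) := by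
        apply Real.log_le_log (by positivity) hprod
    _ = ∑ j ∈ S, Real.log (a j) := Real.log_prod (s := S) (f := a) (fun j hj => (hpos j hj).ne')
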